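/- arXiv:1603.07884 — 5 statements merged into one kernel-verified Lean document; each statement's English description precedes it below -/
import Mathlib

section
/- For integers n and k with 1 ≤ k and 2k ≤ n, ([n]_q / [n-k]_q) · [n-k choose k]_q = q^k [n-k choose k]_q + [n-k-1 choose k-1]_q. -/
/-- q-integer [n]_q = (1-q^n)/(1-q). -/
noncomputable def qint (q : ℂ) (n : ℕ) : ℂ := (1 - q ^ n) / (1 - q)

/-- q-factorial [n]_q!. -/
noncomputable def qfact (q : ℂ) (n : ℕ) : ℂ := ∏ i ∈ Finset.range n, qint q (i + 1)

/-- Gaussian (q-binomial) coefficient, 0 for k > n. -/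
noncomputable def qbinom (q : ℂ) (n k : ℕ) : ℂ :=
  if k ≤ n then qfact q n / (qfact q (n - k) * qfact q k) else 0

/-- q-shifted factorial (x;q)_n. -/
noncomputable def qpoch (x q : ℂ) (n : ℕ) : ℂ := ∏ i ∈ Finset.range n, (1 - q ^ i * x)

theorem qbinom_ratio_identity (q : ℂ) (hq0 : 0 < ‖q‖) (hq1 : ‖q‖ < 1)
    (n k : ℕ) (hk : 1 ≤ k) (hkn : 2 * k ≤ n) :
    qint q n / qint q (n - k) * qbinom q (n - k) k =
      q ^ k * qbinom q (n - k) k + qbinom q (n - k - 1) (k - 1) := by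
  have hpow : ∀ m : ℕ, 1 ≤ m → q ^ m ≠ 1 := by
    intro m hm h
    have h1 : ‖q ^ m‖ < 1 := by
      rw [norm_pow]
      calc ‖q‖ ^ m ≤ ‖q‖ ^ 1 :=
            pow_le_pow_of_le_one (by positivity) hq1.le hm
        _ = ‖q‖ := pow_one _
        _ < 1 := hq1
    rw [h] at h1; simp at h1
  have h1q : (1 : ℂ) - q ≠ 0 := by
    intro h
    exact hpow 1 le_rfl (by rw [pow_one]; exact (sub_eq_zero.mp h).symm)
  have hqint : ∀ m : ℕ, 1 ≤ m → qint q m ≠ 0 := by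
    intro m hm
    exact div_ne_zero (sub_ne_zero.mpr fun h => hpow m hm h.symm) h1q
  have hqfact : ∀ m : ℕ, qfact q m ≠ 0 := by
    intro m
    refine Finset.prod_ne_zero_iff.mpr fun i _ => hqint (i + 1) (by omega)
  have h1 : k ≤ n - k := by omega
  have h2 : k - 1 ≤ n - k - 1 := by omega
  have e1 : n - k - k = n - 2 * k := by omega
  have e2 : n - k - 1 - (k - 1) = n - 2 * k := by omega
  have enk : n - k = (n - k - 1) + 1 := by omega
  have ek : k = (k - 1) + 1 := by omega
  have fnk : qfact q (n - k) = qfact q (n - k - 1) * qint q (n - k) := by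
    rw [enk, qfact, Finset.prod_range_succ, ← enk]; rfl
  have fk : qfact q k = qfact q (k - 1) * qint q k := by
    conv_lhs => rw [ek]
    rw [qfact, Finset.prod_range_succ, ← ek]; rfl
  have key : qint q n = q ^ k * qint q (n - k) + qint q k := by
    rw [qint, qint, qint]
    field_simp
    have : q ^ k * q ^ (n - k) = q ^ n := by
      rw [← pow_add]; congr 1; omega
    ring_nf
    linear_combination this
  rw [qbinom, qbinom, if_pos h1, if_pos h2, e1, e2, fnk, fk]
  have hA := hqint (n - k) (by omega)
  have hK := hqint k hk
  have ha := hqfact (n - k - 1)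
  have hb := hqfact (n - 2 * k)
  have hc := hqfact (k - 1)
  rw [key]
  field_simp
end

section
/- For integers n and k with 1 ≤ k and 2k ≤ n, q^k · ([n]_q / [n-k]_q) · [n-k choose k]_q = q^k [n-k choose k]_q + q^n [n-k-1 choose k-1]_q. -/
theorem qbinom_ratio_identity' (q : ℂ) (hq0 : 0 < ‖q‖) (hq1 : ‖q‖ < 1)
    (n k : ℕ) (hk : 1 ≤ k) (hkn : 2 * k ≤ n) :
    q ^ k * (qint q n / qint q (n - k)) * qbinom q (n - k) k =
      q ^ k * qbinom q (n - k) k + q ^ n * qbinom q (n - k - 1) (k - 1) := by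
  have hq : q ≠ 0 := by
    intro h; simp [h] at hq0
  have hpow : ∀ j : ℕ, 1 ≤ j → q ^ j ≠ 1 := by
    intro j hj h
    have h2 : ‖q ^ j‖ < 1 := by
      rw [norm_pow]
      calc ‖q‖ ^ j ≤ ‖q‖ ^ 1 :=
            pow_le_pow_of_le_one (norm_nonneg q) hq1.le hj
        _ = ‖q‖ := pow_one _
        _ < 1 := hq1
    rw [h] at h2; simp at h2
  have hq1' : (1 : ℂ) - q ≠ 0 := by
    have := hpow 1 le_rfl
    rw [pow_one] at this
    exact sub_ne_zero.mpr (Ne.symm this)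
  have hsub : ∀ j : ℕ, 1 ≤ j → (1 : ℂ) - q ^ j ≠ 0 := fun j hj =>
    sub_ne_zero.mpr (Ne.symm (hpow j hj))
  have hqint : ∀ j : ℕ, 1 ≤ j → qint q j ≠ 0 := fun j hj =>
    div_ne_zero (hsub j hj) hq1'
  have hqfact : ∀ m : ℕ, qfact q m ≠ 0 := by
    intro m
    refine Finset.prod_ne_zero_iff.mpr ?_
    intro i _
    exact hqint (i + 1) (Nat.le_add_left 1 i)
  obtain ⟨m, rfl⟩ : ∃ m, n = m + k := ⟨n - k, by omega⟩
  have hkm : k ≤ m := by omega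
  have hmk : m + k - k = m := by omega
  rw [hmk]
  unfold qbinom
  rw [if_pos hkm, if_pos (by omega : k - 1 ≤ m - 1)]
  rw [show m - 1 - (k - 1) = m - k from by omega]
  have h1 : qfact q m = qfact q (m - 1) * qint q m := by
    conv_lhs => rw [show m = (m - 1) + 1 from by omega]
    rw [qfact, Finset.prod_range_succ, show m - 1 + 1 = m from by omega]
    rfl
  have h2 : qfact q k = qfact q (k - 1) * qint q k := by
    conv_lhs => rw [show k = (k - 1) + 1 from by omega]
    rw [qfact, Finset.prod_range_succ, show k - 1 + 1 = k from by omega]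
    rfl
  rw [h1, h2]
  unfold qint
  have hm1 : (1 : ℂ) - q ^ m ≠ 0 := hsub m (by omega)
  have hk1 : (1 : ℂ) - q ^ k ≠ 0 := hsub k hk
  have hn1 : (1 : ℂ) - q ^ (m + k) ≠ 0 := hsub (m + k) (by omega)
  field_simp [hqfact]
  rw [pow_add]
  ring
end

section
/- The q-Chebyshev polynomials of the second kind satisfy the explicit formula U_n(x,s,q) = Σ_{j=0}^{⌊n/2⌋} q^{j²} [n-j choose j]_q · ((-q;q)_{n-j}/(-q;q)_j) · s^j x^{n-2j} for all n ≥ 0. -/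
/-- q-Chebyshev polynomials of the second kind. -/
noncomputable def qcU (x s q : ℂ) : ℕ → ℂ
  | 0 => 1
  | 1 => (1 + q) * x
  | n + 2 => (1 + q ^ (n + 2)) * x * qcU x s q (n + 1) + q ^ (n + 1) * s * qcU x s q n

set_option maxHeartbeats 1000000

section helpers
variable {q : ℂ} (hq : ∀ i : ℕ, 1 ≤ i → q ^ i ≠ 1)
include hq

lemma qint_ne (i : ℕ) (hi : 1 ≤ i) : qint q i ≠ 0 := by
  have h1 : q ≠ 1 := by simpa using hq 1 le_rfl
  have : (1 : ℂ) - q ≠ 0 := sub_ne_zero.mpr (Ne.symm h1)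
  exact div_ne_zero (sub_ne_zero.mpr (Ne.symm (hq i hi))) this

lemma qfact_ne (n : ℕ) : qfact q n ≠ 0 :=
  Finset.prod_ne_zero_iff.mpr fun i _ => qint_ne hq (i + 1) (Nat.le_add_left 1 i)

lemma one_add_pow_ne (i : ℕ) : (1 : ℂ) + q ^ (i + 1) ≠ 0 := by
  intro h
  have h2 : q ^ (i + 1) = -1 := by linear_combination h
  have : q ^ (2 * (i + 1)) = 1 := by rw [two_mul, pow_add, h2]; ring
  exact hq (2 * (i + 1)) (by omega) this

lemma qpoch_ne (n : ℕ) : qpoch (-q) q n ≠ 0 := by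
  refine Finset.prod_ne_zero_iff.mpr fun i _ => ?_
  have : 1 - q ^ i * (-q) = 1 + q ^ (i + 1) := by ring
  rw [this]; exact one_add_pow_ne hq i

end helpers

lemma qfact_succ (q : ℂ) (n : ℕ) : qfact q (n + 1) = qfact q n * qint q (n + 1) :=
  Finset.prod_range_succ _ n

lemma qpoch_succ (q : ℂ) (n : ℕ) : qpoch (-q) q (n + 1) = qpoch (-q) q n * (1 + q ^ (n + 1)) := by
  rw [qpoch, Finset.prod_range_succ, ← qpoch]; ring


lemma key (q : ℂ) (hq : ∀ i : ℕ, 1 ≤ i → q ^ i ≠ 1) (j t : ℕ) :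
    qbinom q (j + t + 2) (j + 1) * (1 + q ^ (j + t + 2)) =
    (1 + q ^ (2 * j + t + 3)) * qbinom q (j + t + 1) (j + 1)
      + q ^ (t + 1) * (1 + q ^ (j + 1)) * qbinom q (j + t + 1) j := by
  have h1 : j + t + 2 - (j + 1) = t + 1 := by omega
  have h2 : j + t + 1 - (j + 1) = t := by omega
  have h3 : j + t + 1 - j = t + 1 := by omega
  rw [qbinom, if_pos (by omega), qbinom, if_pos (by omega), qbinom, if_pos (by omega),
    h1, h2, h3]
  rw [show j + t + 2 = (j + t + 1) + 1 from rfl, qfact_succ, qfact_succ q t, qfact_succ q j]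
  have hF := qfact_ne hq (j + t + 1)
  have hT := qfact_ne hq t
  have hJ := qfact_ne hq j
  have hq1 : (1 : ℂ) - q ≠ 0 := sub_ne_zero.mpr (Ne.symm (by simpa using hq 1 le_rfl))
  have hA : (1 : ℂ) - q ^ (t + 1) ≠ 0 := sub_ne_zero.mpr (Ne.symm (hq _ (by omega)))
  have hB : (1 : ℂ) - q ^ (j + 1) ≠ 0 := sub_ne_zero.mpr (Ne.symm (hq _ (by omega)))
  have hC : (1 : ℂ) - q ^ (j + t + 2) ≠ 0 := sub_ne_zero.mpr (Ne.symm (hq _ (by omega)))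
  rw [qint, qint, qint]
  field_simp
  ring

noncomputable def cterm (q s x : ℂ) (n j : ℕ) : ℂ :=
  q ^ (j ^ 2) * qbinom q (n - j) j * (qpoch (-q) q (n - j) / qpoch (-q) q j) *
    s ^ j * x ^ (n - 2 * j)

lemma cterm_zero (q s x : ℂ) (n j : ℕ) (h : n < 2 * j) : cterm q s x n j = 0 := by
  have : ¬ (j ≤ n - j) := by omega
  rw [cterm, qbinom, if_neg this]; ring

lemma cterm_rec (q s x : ℂ) (hq : ∀ i : ℕ, 1 ≤ i → q ^ i ≠ 1) (n j : ℕ) (hj : 2 * j ≤ n) :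
    cterm q s x (n + 2) (j + 1) =
      ((1 + q ^ (n + 2)) * x) * cterm q s x (n + 1) (j + 1)
        + (q ^ (n + 1) * s) * cterm q s x n j := by
  obtain ⟨r, hr⟩ : ∃ r, n = 2 * j + r := ⟨n - 2 * j, by omega⟩
  subst hr
  rcases r with _ | t
  · -- r = 0, n = 2j
    have e1 : 2 * j + 0 + 2 - (j + 1) = j + 1 := by omega
    have e2 : 2 * j + 0 + 2 - 2 * (j + 1) = 0 := by omega
    have e3 : 2 * j + 0 + 1 - (j + 1) = j := by omega
    have e4 : 2 * j + 0 - j = j := by omega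
    have e5 : 2 * j + 0 - 2 * j = 0 := by omega
    rw [cterm, cterm, cterm, e1, e2, e3, e4, e5]
    rw [qbinom, if_pos le_rfl, qbinom, if_neg (by omega), qbinom, if_pos le_rfl]
    have h0 : qfact q 0 = 1 := Finset.prod_range_zero _
    rw [Nat.sub_self, Nat.sub_self, h0]
    have hJ1 := qfact_ne hq (j + 1)
    have hJ := qfact_ne hq j
    have hP := qpoch_ne hq (j + 1)
    have hPj := qpoch_ne hq j
    field_simp
    ring
  · -- r = t+1
    have e1 : 2 * j + (t + 1) + 2 - (j + 1) = j + t + 2 := by omega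
    have e2 : 2 * j + (t + 1) + 2 - 2 * (j + 1) = t + 1 := by omega
    have e3 : 2 * j + (t + 1) + 1 - (j + 1) = j + t + 1 := by omega
    have e4 : 2 * j + (t + 1) + 1 - 2 * (j + 1) = t := by omega
    have e5 : 2 * j + (t + 1) - j = j + t + 1 := by omega
    have e6 : 2 * j + (t + 1) - 2 * j = t + 1 := by omega
    rw [cterm, cterm, cterm, e1, e2, e3, e4, e5, e6]
    have p2 : qpoch (-q) q (j + t + 2) = qpoch (-q) q (j + t + 1) * (1 + q ^ (j + t + 2)) :=
      qpoch_succ q (j + t + 1)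
    have pk : qpoch (-q) q (j + 1) = qpoch (-q) q j * (1 + q ^ (j + 1)) := qpoch_succ q j
    simp only [p2, pk, div_eq_mul_inv, mul_inv]
    have hP := qpoch_ne hq (j + t + 1)
    have hPj := qpoch_ne hq j
    have hD : (1 : ℂ) + q ^ (j + t + 2) ≠ 0 := one_add_pow_ne hq (j + t + 1)
    have hE : (1 : ℂ) + q ^ (j + 1) ≠ 0 := one_add_pow_ne hq j
    have hkey := key q hq j t
    have hu : (1 + q ^ (j + 1)) * (1 + q ^ (j + 1))⁻¹ = 1 := mul_inv_cancel₀ hE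
    linear_combination (q ^ ((j + 1) ^ 2) * s ^ (j + 1) * x ^ (t + 1) *
        qpoch (-q) q (j + t + 1) * (qpoch (-q) q j)⁻¹ * (1 + q ^ (j + 1))⁻¹) * hkey
      + (q ^ (j ^ 2) * q ^ (2 * j + (t + 1) + 1) * s ^ (j + 1) * x ^ (t + 1) *
        qpoch (-q) q (j + t + 1) * (qpoch (-q) q j)⁻¹ * qbinom q (j + t + 1) j) * hu

lemma cterm_head (q s x : ℂ) (hq : ∀ i : ℕ, 1 ≤ i → q ^ i ≠ 1) (n : ℕ) :
    cterm q s x n 0 = qpoch (-q) q n * x ^ n := by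
  rw [cterm]
  simp only [Nat.sub_zero, Nat.mul_zero]
  rw [qbinom, if_pos (Nat.zero_le n)]
  have h0 : qfact q 0 = 1 := Finset.prod_range_zero _
  have hp0 : qpoch (-q) q 0 = 1 := Finset.prod_range_zero _
  rw [Nat.sub_zero, h0, hp0]
  have := qfact_ne hq n
  field_simp
  simp

lemma sum_drop (q s x : ℂ) (n M : ℕ) (hM : n / 2 + 1 ≤ M) :
    ∑ j ∈ Finset.range M, cterm q s x n j = ∑ j ∈ Finset.range (n / 2 + 1), cterm q s x n j := by
  refine (Finset.sum_subset (Finset.range_subset_range.mpr hM) ?_).symm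
  intro j hj hj'
  simp only [Finset.mem_range, not_lt] at hj hj'
  exact cterm_zero q s x n j (by omega)

theorem qcU_explicit' (q : ℂ) (hq : ∀ i : ℕ, 1 ≤ i → q ^ i ≠ 1) (x s : ℂ) (n : ℕ) :
    qcU x s q n = ∑ j ∈ Finset.range (n / 2 + 1), cterm q s x n j := by
  induction n using Nat.twoStepInduction with
  | zero =>
    show (1 : ℂ) = _
    rw [Finset.sum_range_one, cterm_head q s x hq 0]
    simp [qpoch]
  | one =>
    show (1 + q) * x = _
    rw [Finset.sum_range_one, cterm_head q s x hq 1]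
    simp [qpoch]
  | more n ih1 ih2 =>
    show (1 + q ^ (n + 2)) * x * qcU x s q (n + 1) + q ^ (n + 1) * s * qcU x s q n = _
    rw [ih1, ih2]
    have hr : (n + 2) / 2 + 1 = n / 2 + 2 := by omega
    rw [hr]
    rw [show (∑ j ∈ Finset.range ((n + 1) / 2 + 1), cterm q s x (n + 1) j)
        = ∑ j ∈ Finset.range (n / 2 + 2), cterm q s x (n + 1) j from
      (sum_drop q s x (n + 1) _ (by omega)).symm]
    rw [Finset.sum_range_succ' (fun j => cterm q s x (n + 2) j) (n / 2 + 1),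
      Finset.sum_range_succ' (fun j => cterm q s x (n + 1) j) (n / 2 + 1)]
    have hrec : ∀ j ∈ Finset.range (n / 2 + 1),
        cterm q s x (n + 2) (j + 1) =
          ((1 + q ^ (n + 2)) * x) * cterm q s x (n + 1) (j + 1)
            + (q ^ (n + 1) * s) * cterm q s x n j := by
      intro j hj
      simp only [Finset.mem_range] at hj
      exact cterm_rec q s x hq n j (by omega)
    rw [Finset.sum_congr rfl hrec, Finset.sum_add_distrib, ← Finset.mul_sum, ← Finset.mul_sum]
    have hhead : cterm q s x (n + 2) 0 = ((1 + q ^ (n + 2)) * x) * cterm q s x (n + 1) 0 := by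
      rw [cterm_head q s x hq, cterm_head q s x hq,
        show qpoch (-q) q (n + 2) = qpoch (-q) q (n + 1) * (1 + q ^ (n + 2)) from
          qpoch_succ q (n + 1)]
      ring
    rw [hhead]
    ring

theorem qcU_explicit (q : ℂ) (hq0 : 0 < ‖q‖) (hq1 : ‖q‖ < 1)
    (x s : ℂ) (n : ℕ) :
    qcU x s q n = ∑ j ∈ Finset.range (n / 2 + 1),
      q ^ (j ^ 2) * qbinom q (n - j) j * (qpoch (-q) q (n - j) / qpoch (-q) q j) *
        s ^ j * x ^ (n - 2 * j) := by
  have hq : ∀ i : ℕ, 1 ≤ i → q ^ i ≠ 1 := by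
    intro i hi h
    have h1 : ‖q‖ ^ i < 1 :=
      pow_lt_one₀ (norm_nonneg q) hq1 (by omega)
    rw [← norm_pow, h] at h1
    simp at h1
  exact qcU_explicit' q hq x s n
end

section
/- For n ≥ 0, the sum of the incomplete q-Chebyshev polynomials of the second kind over all valid truncation indices satisfies Σ_{k=0}^{⌊n/2⌋} U_n^k(x,s,q) = (⌊n/2⌋ − n/2 + 1) U_n(x,s,q) + (x/2) (d/dx) U_n(x,s,q). -/
/-- Truncated q-Chebyshev polynomial of the second kind, as a polynomial in x:
`UP s q n (k+1)` is U_n^k, and `UP s q n (n/2+1)` is the full polynomial U_n. -/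
noncomputable def UP (s q : ℂ) (n m : ℕ) : Polynomial ℂ :=
  ∑ j ∈ Finset.range m,
    Polynomial.C (q ^ (j ^ 2) * qbinom q (n - j) j *
      (qpoch (-q) q (n - j) / qpoch (-q) q j) * s ^ j) * Polynomial.X ^ (n - 2 * j)


lemma sum_tri {M : Type*} [AddCommMonoid M] (f : ℕ → M) (m : ℕ) :
    ∑ k ∈ Finset.range (m + 1), ∑ j ∈ Finset.range (k + 1), f j =
      ∑ j ∈ Finset.range (m + 1), (m + 1 - j) • f j := by
  induction m with
  | zero => simp
  | succ m ih =>
    rw [Finset.sum_range_succ, ih]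
    have h : ∀ j ∈ Finset.range (m + 1), (m + 1 + 1 - j) • f j = (m + 1 - j) • f j + f j := by
      intro j hj
      rw [Finset.mem_range] at hj
      rw [show m + 1 + 1 - j = (m + 1 - j) + 1 by omega, succ_nsmul]
    rw [Finset.sum_range_succ (f := fun j => (m + 1 + 1 - j) • f j),
      Finset.sum_congr rfl h, Finset.sum_add_distrib]
    simp [Finset.sum_range_succ (f := f), add_assoc]

theorem sum_Uinc (q : ℂ) (hq0 : 0 < ‖q‖) (hq1 : ‖q‖ < 1)
    (s : ℂ) (n : ℕ) :
    ∑ k ∈ Finset.range (n / 2 + 1), UP s q n (k + 1) =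
      Polynomial.C (((n / 2 : ℕ) : ℂ) - (n : ℂ) / 2 + 1) * UP s q n (n / 2 + 1) +
        Polynomial.C (1 / 2) *
          (Polynomial.X * Polynomial.derivative (UP s q n (n / 2 + 1))) := by
  simp only [UP, Polynomial.derivative_sum, Finset.mul_sum, ← Finset.sum_add_distrib]
  rw [sum_tri]
  refine Finset.sum_congr rfl ?_
  intro j hj
  rw [Finset.mem_range] at hj
  have hj' : j ≤ n / 2 := Nat.lt_succ_iff.mp hj
  have h2j : 2 * j ≤ n := le_trans (Nat.mul_le_mul_left 2 hj') (Nat.mul_div_le n 2)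
  set a : ℂ := q ^ (j ^ 2) * qbinom q (n - j) j *
      (qpoch (-q) q (n - j) / qpoch (-q) q j) * s ^ j with ha
  set e : ℕ := n - 2 * j with he
  have hcast : (↑(n / 2 + 1 - j) : ℂ) =
      (((n / 2 : ℕ) : ℂ) - (n : ℂ) / 2 + 1) + (e : ℂ) / 2 := by
    have h1 : j ≤ n / 2 + 1 := le_trans hj' (Nat.le_succ _)
    rw [he]
    push_cast [Nat.cast_sub h1, Nat.cast_sub h2j]
    ring
  rw [Polynomial.derivative_C_mul_X_pow]
  rcases Nat.eq_zero_or_pos e with h0 | hpos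
  · rw [h0]
    simp only [Nat.cast_zero, mul_zero, Polynomial.C_0, zero_mul, mul_zero, add_zero,
      pow_zero, mul_one]
    rw [nsmul_eq_mul, ← Polynomial.C_eq_natCast, ← Polynomial.C_mul, ← Polynomial.C_mul]
    congr 1
    rw [hcast, h0]
    push_cast
    ring
  · have hx : Polynomial.X * (Polynomial.C (a * (e : ℂ)) * Polynomial.X ^ (e - 1)) =
        Polynomial.C (a * (e : ℂ)) * Polynomial.X ^ e := by
      rw [mul_comm Polynomial.X, mul_assoc, ← pow_succ, Nat.sub_add_cancel hpos]
    rw [hx, nsmul_eq_mul, ← Polynomial.C_eq_natCast, hcast, Polynomial.C_add, add_mul]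
    congr 1
    rw [← mul_assoc, ← mul_assoc, ← Polynomial.C_mul, ← Polynomial.C_mul]
    congr 1
    ring
end

section
/- For n ≥ 1, the sum of the incomplete q-Chebyshev polynomials of the first kind over all valid truncation indices satisfies Σ_{k=0}^{⌊n/2⌋} T_n^k(x,s,q) = (⌊n/2⌋ − n/2 + 1) T_n(x,s,q) + (x/2) (d/dx) T_n(x,s,q). -/
/-- Truncated q-Chebyshev polynomial of the first kind, as a polynomial in x:
`TP s q n (k+1)` is T_n^k, and `TP s q n (n/2+1)` is the full polynomial T_n. -/
noncomputable def TP (s q : ℂ) (n m : ℕ) : Polynomial ℂ :=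
  ∑ j ∈ Finset.range m,
    Polynomial.C (q ^ (j ^ 2) * (qint q n / qint q (n - j)) * qbinom q (n - j) j *
      (qpoch (-q) q (n - j - 1) / qpoch (-q) q j) * s ^ j) * Polynomial.X ^ (n - 2 * j)


theorem sum_Tinc (q : ℂ) (hq0 : 0 < ‖q‖) (hq1 : ‖q‖ < 1)
    (s : ℂ) (n : ℕ) (hn : 1 ≤ n) :
    ∑ k ∈ Finset.range (n / 2 + 1), TP s q n (k + 1) =
      Polynomial.C (((n / 2 : ℕ) : ℂ) - (n : ℂ) / 2 + 1) * TP s q n (n / 2 + 1) +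
        Polynomial.C (1 / 2) *
          (Polynomial.X * Polynomial.derivative (TP s q n (n / 2 + 1))) := by
  classical
  set m := n / 2 with hm
  set c : ℕ → ℂ := fun j => q ^ (j ^ 2) * (qint q n / qint q (n - j)) * qbinom q (n - j) j *
      (qpoch (-q) q (n - j - 1) / qpoch (-q) q j) * s ^ j with hc
  have hTP : ∀ M, TP s q n M = ∑ j ∈ Finset.range M,
      Polynomial.C (c j) * Polynomial.X ^ (n - 2 * j) := fun M => rfl
  -- LHS: swap the order of summation
  have hLHS : ∑ k ∈ Finset.range (m + 1), TP s q n (k + 1)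
      = ∑ j ∈ Finset.range (m + 1),
          Polynomial.C ((m + 1 - j : ℕ) : ℂ) * (Polynomial.C (c j) * Polynomial.X ^ (n - 2 * j)) := by
    calc ∑ k ∈ Finset.range (m + 1), TP s q n (k + 1)
        = ∑ k ∈ Finset.range (m + 1), ∑ j ∈ Finset.range (k + 1),
            Polynomial.C (c j) * Polynomial.X ^ (n - 2 * j) := by
          simp only [hTP]
      _ = ∑ j ∈ Finset.range (m + 1), ∑ k ∈ Finset.Icc j m,
            Polynomial.C (c j) * Polynomial.X ^ (n - 2 * j) := by
          refine Finset.sum_comm' ?_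
          intro k j
          simp only [Finset.mem_range, Finset.mem_Icc, Nat.lt_succ_iff]
          omega
      _ = ∑ j ∈ Finset.range (m + 1),
            Polynomial.C ((m + 1 - j : ℕ) : ℂ) * (Polynomial.C (c j) * Polynomial.X ^ (n - 2 * j)) := by
          refine Finset.sum_congr rfl fun j hj => ?_
          rw [Finset.sum_const, Nat.card_Icc, nsmul_eq_mul, ← Polynomial.C_eq_natCast]
  rw [hLHS, hTP]
  rw [Polynomial.derivative_sum]
  rw [Finset.mul_sum, Finset.mul_sum, Finset.mul_sum, ← Finset.sum_add_distrib]
  refine Finset.sum_congr rfl fun j hj => ?_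
  have hjm : j ≤ m := Nat.lt_succ_iff.mp (Finset.mem_range.mp hj)
  have h2j : 2 * j ≤ n := by omega
  rw [Polynomial.derivative_C_mul, Polynomial.derivative_X_pow]
  have hXd : Polynomial.X * (Polynomial.C (c j) * (Polynomial.C ((n - 2 * j : ℕ) : ℂ) *
      Polynomial.X ^ (n - 2 * j - 1)))
      = Polynomial.C ((n - 2 * j : ℕ) : ℂ) * (Polynomial.C (c j) * Polynomial.X ^ (n - 2 * j)) := by
    rcases Nat.eq_zero_or_pos (n - 2 * j) with h0 | hpos
    · simp [h0]
    · have : (Polynomial.X : Polynomial ℂ) * Polynomial.X ^ (n - 2 * j - 1)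
          = Polynomial.X ^ (n - 2 * j) := by
        rw [← pow_succ']
        congr 1
        omega
      calc Polynomial.X * (Polynomial.C (c j) * (Polynomial.C ((n - 2 * j : ℕ) : ℂ) *
          Polynomial.X ^ (n - 2 * j - 1)))
          = Polynomial.C (c j) * (Polynomial.C ((n - 2 * j : ℕ) : ℂ) *
            (Polynomial.X * Polynomial.X ^ (n - 2 * j - 1))) := by ring
        _ = _ := by rw [this]; ring
  rw [hXd]
  have hcast1 : ((m + 1 - j : ℕ) : ℂ) = (m : ℂ) + 1 - (j : ℂ) := by
    rw [Nat.cast_sub (by omega)]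
    push_cast
    ring
  have hcast2 : ((n - 2 * j : ℕ) : ℂ) = (n : ℂ) - 2 * (j : ℂ) := by
    rw [Nat.cast_sub h2j]
    push_cast
    ring
  have hcast3 : ((n / 2 : ℕ) : ℂ) = (m : ℂ) := by rw [hm]
  rw [hcast1, hcast2, hcast3,
    show (m : ℂ) + 1 - (j : ℂ) = ((m : ℂ) - (n : ℂ) / 2 + 1) + (1/2) * ((n : ℂ) - 2 * (j : ℂ)) by
      ring,
    Polynomial.C_add, Polynomial.C_mul]
  ring
end
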